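/- Assume: (a) κ is a measurable cardinal; (b) the set of supercompact cardinals below κ is unbounded in κ; (c) U is a normal ultrafilter on κ; (d) {α < κ : α is a measurable cardinal} ∈ U. Then there exists a normal ultrafilter V on κ such that the set B = {α < κ : α is measurable, the supercompact cardinals below α are unbounded in α, and α is not supercompact} belongs to V; moreover, every member of B is a compact cardinal. -/

import Mathlib

open Set

namespace Separability

/-- `F` is an ultrafilter on the set `D` (members of `F` are subsets of `D`). -/
structure IsUltrafilterOnSet {σ : Type*} (D : Set σ) (F : Set (Set σ)) : Prop where
  sets_subset : ∀ X ∈ F, X ⊆ D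
  univ_mem : D ∈ F
  empty_not_mem : ∅ ∉ F
  superset_mem : ∀ X ∈ F, ∀ Y, Y ⊆ D → X ⊆ Y → Y ∈ F
  inter_mem : ∀ X ∈ F, ∀ Y ∈ F, X ∩ Y ∈ F
  mem_or_compl_mem : ∀ X, X ⊆ D → (X ∈ F ∨ D \ X ∈ F)

/-- An ultrafilter on (the type of ordinals below) `κ`. -/
def IsUltrafilterOn (κ : Ordinal) (F : Set (Set Ordinal)) : Prop :=
  IsUltrafilterOnSet (Set.Iio κ) F

/-- `F` is a *normal* ultrafilter on `κ`: it is an ultrafilter on `κ`, it contains every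
co-bounded subset of `κ`, and every function that is regressive on some member of `F`
is constant on some member of `F`. -/
def IsNormalUltrafilterOn (κ : Ordinal) (F : Set (Set Ordinal)) : Prop :=
  IsUltrafilterOn κ F ∧
  (∀ α < κ, {β | α ≤ β ∧ β < κ} ∈ F) ∧
  (∀ f : Ordinal → Ordinal, ∀ S ∈ F, (∀ β ∈ S, 0 < β → f β < β) →
    ∃ T ∈ F, ∃ γ, ∀ β ∈ T, f β = γ)

/-- The ordinal `κ` is a cardinal. -/
def IsCard (κ : Ordinal) : Prop := κ.card.ord = κ

/-- `F` (an ultrafilter on the set `D`) is `κ`-complete: it is closed under intersections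
of families of fewer than `κ` sets. -/
def IsComplete {σ : Type*} (κ : Ordinal) (D : Set σ) (F : Set (Set σ)) : Prop :=
  ∀ δ < κ, ∀ g : Set.Iio δ → Set σ, (∀ i, g i ∈ F) → (D ∩ ⋂ i, g i) ∈ F

/-- `F` is nonprincipal: it contains no singleton. -/
def IsNonprincipal {σ : Type*} (F : Set (Set σ)) : Prop := ∀ b : σ, {b} ∉ F

/-- `α` is a measurable cardinal: an uncountable cardinal carrying a nonprincipal
`α`-complete ultrafilter on `α`. -/
def IsMeasurable (α : Ordinal) : Prop :=
  IsCard α ∧ Ordinal.omega0 < α ∧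
    ∃ F, IsUltrafilterOn α F ∧ IsNonprincipal F ∧ IsComplete α (Set.Iio α) F

/-- `P_κ(λ)`: the subsets of `λ` of cardinality less than `κ`. -/
def sP (κ lam : Ordinal.{0}) : Set (Set Ordinal.{0}) :=
  {x | x ⊆ Set.Iio lam ∧ Cardinal.mk x < Cardinal.lift.{1} κ.card}

/-- `F`, an ultrafilter on `P_κ(λ)`, is *fine*:
for every `i < λ` the set `{x ∈ P_κ(λ) : i ∈ x}` belongs to `F`. -/
def IsFine (κ lam : Ordinal) (F : Set (Set (Set Ordinal))) : Prop :=
  ∀ i < lam, {x | x ∈ sP κ lam ∧ i ∈ x} ∈ F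

/-- `κ` is a compact (strongly compact) cardinal: an uncountable cardinal such that for every
cardinal `λ ≥ κ` there is a `κ`-complete fine ultrafilter on `P_κ(λ)`. -/
def IsCompact (κ : Ordinal) : Prop :=
  IsCard κ ∧ Ordinal.omega0 < κ ∧
    ∀ lam, IsCard lam → κ ≤ lam →
      ∃ F, IsUltrafilterOnSet (sP κ lam) F ∧ IsComplete κ (sP κ lam) F ∧ IsFine κ lam F

/-- `F`, an ultrafilter on `P_κ(λ)`, is *normal*: every choice function on a member of `F`
(`f x ∈ x` for all `x` in some member of `F`) is constant on some member of `F`. -/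
def IsNormalFineMeasure (F : Set (Set (Set Ordinal))) : Prop :=
  ∀ f : Set Ordinal → Ordinal, ∀ S ∈ F, (∀ x ∈ S, f x ∈ x) →
    ∃ T ∈ F, ∃ γ, ∀ x ∈ T, f x = γ

/-- `κ` is a supercompact cardinal: for every cardinal `λ ≥ κ` there is a `κ`-complete
fine normal ultrafilter on `P_κ(λ)`. -/
def IsSupercompact (κ : Ordinal) : Prop :=
  IsCard κ ∧
    ∀ lam, IsCard lam → κ ≤ lam →
      ∃ F, IsUltrafilterOnSet (sP κ lam) F ∧ IsComplete κ (sP κ lam) F ∧ IsFine κ lam F ∧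
        IsNormalFineMeasure F

/-- The set of measurable cardinals below `κ`. -/
def measSet (κ : Ordinal) : Set Ordinal := {α | α < κ ∧ IsMeasurable α}

/-- `S_X = {α < κ : α is measurable and X ∩ α ∈ U_α}`. -/
def sX (κ : Ordinal) (U : Ordinal → Set (Set Ordinal)) (X : Set Ordinal) : Set Ordinal :=
  {α | α < κ ∧ IsMeasurable α ∧ X ∩ Set.Iio α ∈ U α}

/-- The sum of `⟨U_α : α measurable below κ⟩` over `V`: `Y` belongs to the sum iff
`S_Y ∈ V`. -/
def sumUF (κ : Ordinal) (U : Ordinal → Set (Set Ordinal)) (V : Set (Set Ordinal)) :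
    Set (Set Ordinal) :=
  {Y | Y ⊆ Set.Iio κ ∧ sX κ U Y ∈ V}

/-! ### Basic ultrafilter lemmas -/

namespace IsUltrafilterOnSet

variable {σ : Type*} {D : Set σ} {F : Set (Set σ)} {X Y : Set σ}

theorem nonempty_of_mem (hF : IsUltrafilterOnSet D F) (hX : X ∈ F) : X.Nonempty := by
  rcases Set.eq_empty_or_nonempty X with h | h
  · exact absurd (h ▸ hX) hF.empty_not_mem
  · exact h

theorem compl_mem (hF : IsUltrafilterOnSet D F) (hX : X ⊆ D) (h : X ∉ F) : D \ X ∈ F :=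
  (hF.mem_or_compl_mem X hX).resolve_left h

theorem not_mem_of_compl_mem (hF : IsUltrafilterOnSet D F) (h : D \ X ∈ F) (hX : X ⊆ D) : X ∉ F := by
  intro hXF
  have h2 := hF.inter_mem X hXF _ h
  have : X ∩ (D \ X) = ∅ := by ext a; simp only [mem_inter_iff, mem_diff, mem_empty_iff_false]; tauto
  rw [this] at h2
  exact hF.empty_not_mem h2

theorem mem_of_superset (hF : IsUltrafilterOnSet D F) (hX : X ∈ F) (hY : X ⊆ Y) (hYD : Y ⊆ D) : Y ∈ F :=
  hF.superset_mem X hX Y hYD hY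

end IsUltrafilterOnSet

/-- the set of members below γ is not in a complete nonprincipal ultrafilter;
equivalently co-bounded sets are in it. -/
theorem cobounded_mem {α : Ordinal} {F : Set (Set Ordinal)}
    (hF : IsUltrafilterOn α F) (hc : IsComplete α (Set.Iio α) F) (hnp : IsNonprincipal F) :
    ∀ γ < α, {β | γ ≤ β ∧ β < α} ∈ F := by
  intro γ hγ
  have key : (Set.Iio α ∩ ⋂ i : Set.Iio γ, (Set.Iio α \ {(i : Ordinal)})) ∈ F := by
    refine hc γ hγ _ fun i => ?_
    exact hF.compl_mem (by intro y hy; simp at hy; rw [hy]; exact lt_trans i.2 hγ) (hnp i)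
  have : (Set.Iio α ∩ ⋂ i : Set.Iio γ, (Set.Iio α \ {(i : Ordinal)})) = {β | γ ≤ β ∧ β < α} := by
    ext β
    simp only [mem_inter_iff, mem_iInter, mem_diff, mem_singleton_iff, mem_setOf_eq, mem_Iio]
    constructor
    · rintro ⟨hβ, h⟩
      refine ⟨le_of_not_gt fun hlt => ?_, hβ⟩
      exact (h ⟨β, hlt⟩).2 rfl
    · rintro ⟨h1, h2⟩
      exact ⟨h2, fun i => ⟨h2, fun he => absurd (he ▸ i.2) (not_lt.mpr h1)⟩⟩
  rwa [this] at key

theorem two_mem {α : Ordinal} {F : Set (Set Ordinal)}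
    (hF : IsUltrafilterOn α F) (hnp : IsNonprincipal F) {X : Set Ordinal} (hX : X ∈ F) :
    ∃ a ∈ X, ∃ b ∈ X, a ≠ b := by
  obtain ⟨a, ha⟩ := hF.nonempty_of_mem hX
  by_contra h
  push_neg at h
  have hsub : X ⊆ {a} := by
    intro b hb
    by_contra hba
    exact hba ((h a ha b hb).symm ▸ rfl)
  have : ({a} : Set Ordinal) ∈ F := hF.mem_of_superset hX hsub
    (by intro y hy; simp at hy; subst hy; exact hF.sets_subset X hX ha)
  exact hnp a this

/-! ### strong limit -/

open Cardinal in
theorem strong_limit {α : Ordinal.{0}} {F : Set (Set Ordinal)}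
    (hF : IsUltrafilterOn α F) (hc : IsComplete α (Set.Iio α) F)
    (hnp : IsNonprincipal F)
    (c : Cardinal.{0}) (hcα : c < α.card) : 2 ^ c < α.card := by
  by_contra hle
  push_neg at hle
  set β₀ : Ordinal := c.ord with hβ₀
  have hβ₀α : β₀ < α :=
    lt_of_lt_of_le (Cardinal.ord_lt_ord.mpr hcα) (Cardinal.ord_card_le α)
  have hcard : β₀.card = c := Cardinal.card_ord c
  have h1 : #(Set.Iio α) ≤ #(Set (Set.Iio β₀)) := by
    rw [Ordinal.mk_Iio_ordinal, Cardinal.mk_set, Ordinal.mk_Iio_ordinal, hcard,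
      ← Cardinal.lift_two_power]
    exact Cardinal.lift_le.mpr hle
  obtain ⟨E⟩ := (Cardinal.le_def _ _).mp h1
  classical
  let A : Set.Iio β₀ → Set Ordinal := fun ξ => {γ | ∃ h : γ < α, ξ ∈ E ⟨γ, h⟩}
  let g : Set.Iio β₀ → Set Ordinal := fun ξ =>
    if A ξ ∈ F then A ξ else Set.Iio α \ A ξ
  have hg : ∀ ξ, g ξ ∈ F := by
    intro ξ
    by_cases h : A ξ ∈ F
    · simpa [g, h]
    · simp only [g, h, if_false]
      exact hF.compl_mem (fun γ hγ => hγ.1) h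
  have hQ := hc β₀ hβ₀α g hg
  have key : ∀ x, ∀ hx : x ∈ Set.Iio α ∩ ⋂ i, g i, ∀ ξ : Set.Iio β₀,
      (ξ ∈ E ⟨x, hx.1⟩ ↔ A ξ ∈ F) := by
    intro x hx ξ
    have hxι : x ∈ g ξ := by
      have := hx.2
      rw [Set.mem_iInter] at this
      exact this ξ
    by_cases h : A ξ ∈ F
    · simp only [g, h, if_true] at hxι
      refine ⟨fun _ => h, fun _ => ?_⟩
      obtain ⟨h', hξ⟩ := hxι
      exact hξ
    · simp only [g, h, if_false] at hxι
      refine ⟨fun hξ => absurd ⟨hx.1, hξ⟩ hxι.2, fun hh => absurd hh h⟩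
  obtain ⟨a, ha, b, hb, hab⟩ := two_mem hF hnp hQ
  have : E ⟨a, ha.1⟩ = E ⟨b, hb.1⟩ := by
    ext ξ
    rw [key a ha ξ, key b hb ξ]
  exact hab (congrArg Subtype.val (E.injective this))

open Cardinal in
theorem succ_ord_lt {α : Ordinal.{0}} {F : Set (Set Ordinal)}
    (hF : IsUltrafilterOn α F) (hc : IsComplete α (Set.Iio α) F)
    (hnp : IsNonprincipal F) (hcard : IsCard α)
    (c : Cardinal.{0}) (hcα : c < α.card) : (Order.succ c).ord < α := by
  have h2 : (2:Cardinal) ^ c < α.card := strong_limit hF hc hnp c hcα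
  have : Order.succ c ≤ 2 ^ c := Order.succ_le_of_lt (Cardinal.cantor c)
  calc (Order.succ c).ord ≤ ((2:Cardinal) ^ c).ord := Cardinal.ord_le_ord.mpr this
    _ < α.card.ord := Cardinal.ord_lt_ord.mpr h2
    _ = α := hcard

/-- For a normal, complete, nonprincipal ultrafilter on a cardinal α,
the set of cardinals below α is in the filter. -/
theorem isCard_mem {α : Ordinal.{0}} {F : Set (Set Ordinal)}
    (hN : IsNormalUltrafilterOn α F) (hc : IsComplete α (Set.Iio α) F)
    (hnp : IsNonprincipal F) (hcard : IsCard α) (hα : Ordinal.omega0 < α) :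
    {β | β < α ∧ IsCard β} ∈ F := by
  obtain ⟨hF, hcob, hnorm⟩ := hN
  by_contra hmem
  have hNC : (Set.Iio α \ {β | β < α ∧ IsCard β}) ∈ F :=
    hF.compl_mem (fun β hβ => hβ.1) hmem
  -- shrink to β ≥ 1
  have h1α : (1:Ordinal) < α := lt_trans Ordinal.one_lt_omega0 hα
  have hS : (Set.Iio α \ {β | β < α ∧ IsCard β}) ∩ {β | 1 ≤ β ∧ β < α} ∈ F :=
    hF.inter_mem _ hNC _ (hcob 1 h1α)
  set S := (Set.Iio α \ {β | β < α ∧ IsCard β}) ∩ {β | 1 ≤ β ∧ β < α} with hSdef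
  have hreg : ∀ β ∈ S, 0 < β → β.card.ord < β := by
    intro β hβ _
    rcases lt_or_eq_of_le (Cardinal.ord_card_le β) with h | h
    · exact h
    · exact absurd ⟨hβ.1.1, h⟩ hβ.1.2
  obtain ⟨T, hT, γ₀, hγ₀⟩ := hnorm (fun β => β.card.ord) S hS hreg
  have hTS : T ∩ S ∈ F := hF.inter_mem _ hT _ hS
  obtain ⟨β₁, hβ₁⟩ := hF.nonempty_of_mem hTS
  have hγ₀β₁ : γ₀ < β₁ := by
    rw [← hγ₀ β₁ hβ₁.1]
    exact hreg β₁ hβ₁.2 (lt_of_lt_of_le zero_lt_one hβ₁.2.2.1)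
  have hγ₀α : γ₀ < α := lt_trans hγ₀β₁ hβ₁.2.2.2
  have hcγ : γ₀.card < α.card := by
    have hx : γ₀ < α.card.ord := by rw [hcard]; exact hγ₀α
    exact Cardinal.lt_ord.mp hx
  set bd : Ordinal := (Order.succ γ₀.card).ord with hbd
  have hbdα : bd < α := succ_ord_lt hF hc hnp hcard _ hcγ
  -- every element of T ∩ S is below bd
  have hbound : ∀ β ∈ T ∩ S, β < bd := by
    intro β hβ
    have h1 : β.card.ord = γ₀ := hγ₀ β hβ.1
    have h2 : β.card = γ₀.card := by
      rw [← Cardinal.card_ord β.card, h1]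
    rw [hbd, Cardinal.lt_ord, h2]
    exact Order.lt_succ_of_le le_rfl
  have hcb : {β | bd ≤ β ∧ β < α} ∈ F := hcob bd hbdα
  have : T ∩ S ∩ {β | bd ≤ β ∧ β < α} ∈ F := hF.inter_mem _ hTS _ hcb
  obtain ⟨β₂, hβ₂⟩ := hF.nonempty_of_mem this
  exact absurd (hbound β₂ hβ₂.1) (not_lt.mpr hβ₂.2.1)

/-! ### supercompact cardinals are uncountable -/

theorem isCard_omega0 : IsCard Ordinal.omega0 := by
  unfold IsCard
  rw [Ordinal.card_omega0]
  exact Cardinal.ord_aleph0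

theorem sP_mono {δ α lam : Ordinal} (h : δ ≤ α) : sP δ lam ⊆ sP α lam := by
  intro x hx
  exact ⟨hx.1, lt_of_lt_of_le hx.2 (Cardinal.lift_le.mpr (Ordinal.card_le_card h))⟩

theorem sc_omega0_lt {α : Ordinal.{0}} (hsc : IsSupercompact α) : Ordinal.omega0 < α := by
  by_contra hle
  push_neg at hle
  obtain ⟨hcard, hmeas⟩ := hsc
  obtain ⟨F, hF, hcomp, hfine, hnorm⟩ := hmeas Ordinal.omega0 isCard_omega0 hle
  -- every member of sP α ω is finite
  have hfin : ∀ x ∈ sP α Ordinal.omega0, x.Finite := by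
    intro x hx
    have h1 : Cardinal.mk x < Cardinal.lift.{1} α.card := hx.2
    have h2 : Cardinal.lift.{1} α.card ≤ Cardinal.lift.{1} Cardinal.aleph0.{0} := by
      refine Cardinal.lift_le.mpr ?_
      rw [← Ordinal.card_omega0]
      exact Ordinal.card_le_card hle
    rw [Cardinal.lift_aleph0.{1,0}] at h2
    rw [← Cardinal.lt_aleph0_iff_set_finite]
    exact lt_of_lt_of_le h1 h2
  set S := {x | x ∈ sP α Ordinal.omega0 ∧ (0:Ordinal) ∈ x} with hS
  have hSF : S ∈ F := hfine 0 Ordinal.omega0_pos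
  have hsup : ∀ x ∈ S, sSup x ∈ x := by
    intro x hx
    exact Set.Nonempty.csSup_mem ⟨0, hx.2⟩ (hfin x hx.1)
  obtain ⟨T, hT, γ, hγ⟩ := hnorm (fun x => sSup x) S hSF hsup
  have hTS : T ∩ S ∈ F := hF.inter_mem _ hT _ hSF
  obtain ⟨x₀, hx₀⟩ := hF.nonempty_of_mem hTS
  have hγx₀ : γ ∈ x₀ := by
    rw [← hγ x₀ hx₀.1]
    exact hsup x₀ hx₀.2
  have hγω : γ < Ordinal.omega0 := hx₀.2.1.1 hγx₀
  have hγ1ω : γ + 1 < Ordinal.omega0 := by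
    rw [Ordinal.add_one_eq_succ]
    exact Ordinal.isSuccLimit_omega0.succ_lt hγω
  have hT2 : T ∩ S ∩ {x | x ∈ sP α Ordinal.omega0 ∧ γ + 1 ∈ x} ∈ F :=
    hF.inter_mem _ hTS _ (hfine (γ+1) hγ1ω)
  obtain ⟨x, hx⟩ := hF.nonempty_of_mem hT2
  have h1 : sSup x = γ := hγ x hx.1.1
  have h2 : γ + 1 ≤ sSup x := le_csSup ((hfin x hx.1.2.1).bddAbove) hx.2.2
  rw [h1] at h2
  have : γ < γ + 1 := by rw [Ordinal.add_one_eq_succ]; exact Order.lt_succ γ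
  exact absurd h2 (not_le.mpr this)

/-! ### least element helper -/

open Classical in
noncomputable def omin (S : Set Ordinal) : Ordinal :=
  if h : S.Nonempty then Ordinal.lt_wf.min S h else 0

theorem omin_mem {S : Set Ordinal} (h : S.Nonempty) : omin S ∈ S := by
  classical
  rw [omin]; rw [dif_pos h]
  exact Ordinal.lt_wf.min_mem S h

theorem not_lt_omin {S : Set Ordinal} (h : S.Nonempty) {x : Ordinal} (hx : x ∈ S) :
    ¬ x < omin S := by
  classical
  rw [omin]; rw [dif_pos h]
  exact Ordinal.lt_wf.not_lt_min S hx

/-! ### generic facts about fine normal measures on `sP α lam` -/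

section FineMeasure

variable {α lam : Ordinal.{0}} {N : Set (Set (Set Ordinal.{0}))}

/-- normality with shrinking -/
theorem norm_const {hNn : IsNormalFineMeasure N}
    (hNu : IsUltrafilterOnSet (sP α lam) N)
    (f : Set Ordinal → Ordinal) (S : Set (Set Ordinal)) (hS : S ∈ N)
    (hf : ∀ x ∈ S, f x ∈ x) :
    ∃ T ∈ N, T ⊆ S ∧ ∃ γ, ∀ x ∈ T, f x = γ := by
  obtain ⟨T, hT, γ, hγ⟩ := hNn f S hS hf
  exact ⟨T ∩ S, hNu.inter_mem _ hT _ hS, Set.inter_subset_right,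
    γ, fun x hx => hγ x hx.1⟩

/-- diagonal intersections -/
theorem diag_mem (hNu : IsUltrafilterOnSet (sP α lam) N) (hNn : IsNormalFineMeasure N)
    (X : Ordinal → Set (Set Ordinal)) (hX : ∀ i, X i ∈ N) :
    {x | x ∈ sP α lam ∧ ∀ i ∈ x, x ∈ X i} ∈ N := by
  classical
  by_contra hG
  have hSub : {x | x ∈ sP α lam ∧ ∀ i ∈ x, x ∈ X i} ⊆ sP α lam := fun x hx => hx.1
  have hS : sP α lam \ {x | x ∈ sP α lam ∧ ∀ i ∈ x, x ∈ X i} ∈ N := hNu.compl_mem hSub hG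
  set S := sP α lam \ {x | x ∈ sP α lam ∧ ∀ i ∈ x, x ∈ X i} with hSdef
  have hwit : ∀ x ∈ S, ∃ i ∈ x, x ∉ X i := by
    intro x hx
    rw [hSdef, Set.mem_diff, Set.mem_setOf_eq] at hx
    have h2 := hx.2
    push_neg at h2
    exact h2 hx.1
  set f : Set Ordinal → Ordinal := fun x =>
    if h : ∃ i ∈ x, x ∉ X i then h.choose else 0 with hfdef
  have hf : ∀ x ∈ S, f x ∈ x ∧ x ∉ X (f x) := by
    intro x hx
    have h := hwit x hx
    rw [hfdef]
    simp only [dif_pos h]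
    exact ⟨h.choose_spec.1, h.choose_spec.2⟩
  obtain ⟨T, hT, hTS, i₀, hi₀⟩ := norm_const (hNn := hNn) hNu f S hS (fun x hx => (hf x hx).1)
  have hT2 : T ∩ X i₀ ∈ N := hNu.inter_mem _ hT _ (hX i₀)
  obtain ⟨y, hy⟩ := hNu.nonempty_of_mem hT2
  have h1 : y ∉ X (f y) := (hf y (hTS hy.1)).2
  rw [hi₀ y hy.1] at h1
  exact h1 hy.2

end FineMeasure

/-! ### coding subsets of `Iio α` by ordinals below `clam α = (2^|α|).ord` -/

noncomputable section Coding

open Cardinal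

def clam (α : Ordinal.{0}) : Ordinal := ((2:Cardinal) ^ α.card).ord

theorem le_clam {α : Ordinal.{0}} (hcard : IsCard α) : α ≤ clam α := by
  conv_lhs => rw [← hcard]
  exact Cardinal.ord_le_ord.mpr (Cardinal.cantor α.card).le

theorem isCard_clam (α : Ordinal.{0}) : IsCard (clam α) := by
  unfold IsCard clam
  rw [Cardinal.card_ord]

theorem clam_pos {α : Ordinal.{0}} (h : 0 < α) (hcard : IsCard α) : 0 < clam α :=
  lt_of_lt_of_le h (le_clam hcard)

theorem mk_eq_code (α : Ordinal.{0}) :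
    #(Set.Iio (clam α)) = #(Set (Set.Iio α)) := by
  rw [Ordinal.mk_Iio_ordinal, Cardinal.mk_set, Ordinal.mk_Iio_ordinal]
  unfold clam
  rw [Cardinal.card_ord, Cardinal.lift_power]
  norm_num

def codeEquiv (α : Ordinal.{0}) : (Set.Iio (clam α)) ≃ Set (Set.Iio α) :=
  Classical.choice (Cardinal.eq.mp (mk_eq_code α))

open Classical in
def ecode (α : Ordinal.{0}) (i : Ordinal) : Set Ordinal :=
  if h : i < clam α then Subtype.val '' (codeEquiv α ⟨i, h⟩) else ∅

def cod (α : Ordinal.{0}) (Z : Set Ordinal) : Ordinal :=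
  ((codeEquiv α).symm {y : Set.Iio α | (y : Ordinal) ∈ Z}).val

theorem ecode_subset (α : Ordinal.{0}) (i : Ordinal) : ecode α i ⊆ Set.Iio α := by
  classical
  unfold ecode
  split
  · rintro β ⟨y, _, rfl⟩
    exact y.2
  · exact empty_subset _

theorem cod_lt (α : Ordinal.{0}) (Z : Set Ordinal) : cod α Z < clam α :=
  ((codeEquiv α).symm _).2

theorem ecode_cod {α : Ordinal.{0}} {Z : Set Ordinal} (hZ : Z ⊆ Set.Iio α) :
    ecode α (cod α Z) = Z := by
  classical
  unfold ecode cod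
  have hlt : ((codeEquiv α).symm {y : Set.Iio α | (y : Ordinal) ∈ Z}).val < clam α :=
    ((codeEquiv α).symm _).2
  rw [dif_pos hlt]
  have heq : (⟨((codeEquiv α).symm {y : Set.Iio α | (y : Ordinal) ∈ Z}).val, hlt⟩ :
      Set.Iio (clam α)) = (codeEquiv α).symm {y : Set.Iio α | (y : Ordinal) ∈ Z} :=
    Subtype.ext rfl
  rw [heq, Equiv.apply_symm_apply]
  ext β
  constructor
  · rintro ⟨y, hy, rfl⟩
    exact hy
  · intro hβ
    exact ⟨⟨β, hZ hβ⟩, hβ, rfl⟩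

end Coding

/-! ### the derived normal ultrafilter on a supercompact α -/

section Derived

open Cardinal

variable (α : Ordinal.{0})

/-- the domain -/
def Dee : Set (Set Ordinal.{0}) := sP α (clam α)

/-- the a.e. set of "transitive-below-α" elements -/
def G0 : Set (Set Ordinal.{0}) :=
  {x | x ∈ Dee α ∧ ∀ β ∈ x, β < α → ∀ γ < β, γ ∈ x}

/-- `p x` : the least ordinal below α not in x  -/
noncomputable def pfun (x : Set Ordinal) : Ordinal := omin (Set.Iio α \ x)

/-- the derived measure on α -/
def derivU (N : Set (Set (Set Ordinal.{0}))) : Set (Set Ordinal.{0}) :=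
  {Y | Y ⊆ Set.Iio α ∧ {x | x ∈ G0 α ∧ pfun α x ∈ Y} ∈ N}

variable {α}

theorem compl_nonempty {x : Set Ordinal} (hx : x ∈ Dee α) : (Set.Iio α \ x).Nonempty := by
  rw [Set.nonempty_iff_ne_empty]
  intro h
  have hsub : Set.Iio α ⊆ x := by
    intro β hβ
    by_contra hβx
    exact (Set.eq_empty_iff_forall_notMem.mp h β) ⟨hβ, hβx⟩
  have h1 : #(Set.Iio α) ≤ #x := Cardinal.mk_le_mk_of_subset hsub
  rw [Ordinal.mk_Iio_ordinal] at h1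
  exact absurd (lt_of_le_of_lt h1 hx.2) (lt_irrefl _)

theorem pfun_mem (hx : x ∈ Dee α) : pfun α x ∈ Set.Iio α \ x :=
  omin_mem (compl_nonempty hx)

theorem pfun_lt (hx : x ∈ Dee α) : pfun α x < α := (pfun_mem hx).1

theorem mem_G0_iff {x : Set Ordinal} (hx : x ∈ G0 α) {β : Ordinal} :
    β ∈ x ∧ β < α ↔ β < pfun α x := by
  constructor
  · rintro ⟨hβx, hβα⟩
    by_contra hlt
    push_neg at hlt
    rcases lt_or_eq_of_le hlt with h | h
    · -- pfun α x < β, so pfun α x ∈ x by transitivity: contradiction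
      exact (pfun_mem hx.1).2 (hx.2 β hβx hβα _ h)
    · exact (pfun_mem hx.1).2 (h ▸ hβx)
  · intro hβ
    have hβα : β < α := lt_trans hβ (pfun_lt hx.1)
    by_contra hc
    push_neg at hc
    exact not_lt_omin (compl_nonempty hx.1) ⟨hβα, fun h => absurd (hc h) (not_le.mpr hβα)⟩ hβ

theorem G0_subset : G0 α ⊆ Dee α := fun x hx => hx.1

end Derived

section DerivedFacts

variable {α : Ordinal.{0}} {N : Set (Set (Set Ordinal.{0}))}

theorem G0_mem (hcard : IsCard α)
    (hNu : IsUltrafilterOnSet (Dee α) N) (hNc : IsComplete α (Dee α) N)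
    (hNf : IsFine α (clam α) N) (hNn : IsNormalFineMeasure N) : G0 α ∈ N := by
  classical
  by_contra hG
  have hS : Dee α \ G0 α ∈ N := hNu.compl_mem G0_subset hG
  set S := Dee α \ G0 α with hSdef
  set bad : Set Ordinal → Set Ordinal := fun x => {β | β ∈ x ∧ β < α ∧ ∃ γ < β, γ ∉ x}
    with hbaddef
  have hwit : ∀ x ∈ S, (bad x).Nonempty := by
    rintro x ⟨hxD, hxG⟩
    have : ¬ (x ∈ Dee α ∧ ∀ β ∈ x, β < α → ∀ γ < β, γ ∈ x) := hxG
    push_neg at this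
    obtain ⟨β, hβx, hβα, γ, hγβ, hγx⟩ := this hxD
    exact ⟨β, hβx, hβα, γ, hγβ, hγx⟩
  set f : Set Ordinal → Ordinal := fun x => omin (bad x) with hfdef
  have hf : ∀ x ∈ S, f x ∈ x := fun x hx => (omin_mem (hwit x hx)).1
  obtain ⟨T, hT, hTS, β₀, hβ₀⟩ := norm_const (hNn := hNn) hNu f S hS hf
  obtain ⟨x₁, hx₁⟩ := hNu.nonempty_of_mem hT
  have hβ₀α : β₀ < α := by
    have := (omin_mem (hwit x₁ (hTS hx₁))).2.1
    rwa [show omin (bad x₁) = β₀ from hβ₀ x₁ hx₁] at this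
  set g : Set Ordinal → Ordinal := fun x => omin {γ | γ < β₀ ∧ γ ∉ x} with hgdef
  have hg : ∀ x ∈ T, g x < β₀ ∧ g x ∉ x := by
    intro x hx
    have hb := omin_mem (hwit x (hTS hx))
    rw [show omin (bad x) = β₀ from hβ₀ x hx] at hb
    obtain ⟨γ, hγβ, hγx⟩ := hb.2.2
    have hne : {γ | γ < β₀ ∧ γ ∉ x}.Nonempty := ⟨γ, hγβ, hγx⟩
    exact ⟨(omin_mem hne).1, (omin_mem hne).2⟩
  have hpart : ∃ γ₀ < β₀, {x | x ∈ T ∧ g x = γ₀} ∈ N := by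
    by_contra hnone
    push_neg at hnone
    set fam : Set.Iio β₀ → Set (Set Ordinal) :=
      fun i => Dee α \ {x | x ∈ T ∧ g x = i.val} with hfam
    have hfamN : ∀ i, fam i ∈ N := by
      intro i
      refine hNu.compl_mem (fun x hx => hTS hx.1 |>.1) (hnone i.val i.2)
    have hQ := hNc β₀ hβ₀α fam hfamN
    have hQT : (Dee α ∩ ⋂ i, fam i) ∩ T ∈ N := hNu.inter_mem _ hQ _ hT
    obtain ⟨x, hx⟩ := hNu.nonempty_of_mem hQT
    have hgx := hg x hx.2
    have := hx.1.2
    rw [Set.mem_iInter] at this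
    have hxi := this ⟨g x, hgx.1⟩
    exact hxi.2 ⟨hx.2, rfl⟩
  obtain ⟨γ₀, hγ₀β₀, hTγ₀⟩ := hpart
  have hγ₀lam : γ₀ < clam α := lt_of_lt_of_le (lt_trans hγ₀β₀ hβ₀α) (le_clam hcard)
  have hfine := hNf γ₀ hγ₀lam
  have : {x | x ∈ sP α (clam α) ∧ γ₀ ∈ x} ∩ {x | x ∈ T ∧ g x = γ₀} ∈ N :=
    hNu.inter_mem _ hfine _ hTγ₀
  obtain ⟨x, hx⟩ := hNu.nonempty_of_mem this
  exact (hg x hx.2.1).2 (hx.2.2 ▸ hx.1.2)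

theorem fine_G0_mem (hcard : IsCard α)
    (hNu : IsUltrafilterOnSet (Dee α) N) (hNc : IsComplete α (Dee α) N)
    (hNf : IsFine α (clam α) N) (hNn : IsNormalFineMeasure N)
    {γ : Ordinal} (hγ : γ < α) : {x | x ∈ G0 α ∧ γ < pfun α x} ∈ N := by
  have h1 : G0 α ∩ {x | x ∈ sP α (clam α) ∧ γ ∈ x} ∈ N :=
    hNu.inter_mem _ (G0_mem hcard hNu hNc hNf hNn) _ (hNf γ (lt_of_lt_of_le hγ (le_clam hcard)))
  refine hNu.mem_of_superset h1 ?_ (fun x hx => hx.1.1)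
  intro x hx
  exact ⟨hx.1, (mem_G0_iff hx.1).mp ⟨hx.2.2, hγ⟩⟩

end DerivedFacts

section DerivedU

variable {α : Ordinal.{0}} {N : Set (Set (Set Ordinal.{0}))}
variable (hcard : IsCard α) (h0 : 0 < α)
variable (hNu : IsUltrafilterOnSet (Dee α) N) (hNc : IsComplete α (Dee α) N)
variable (hNf : IsFine α (clam α) N) (hNn : IsNormalFineMeasure N)

theorem derivU_mem_iff {Y : Set Ordinal} :
    Y ∈ derivU α N ↔ Y ⊆ Set.Iio α ∧ {x | x ∈ G0 α ∧ pfun α x ∈ Y} ∈ N := Iff.rfl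

include hcard hNu hNc hNf hNn

theorem derivU_uf : IsUltrafilterOn α (derivU α N) := by
  have hG0 := G0_mem hcard hNu hNc hNf hNn
  constructor
  · exact fun Y hY => hY.1
  · refine ⟨le_refl _, ?_⟩
    refine hNu.mem_of_superset hG0 ?_ (fun x hx => G0_subset hx.1)
    intro x hx
    exact ⟨hx, pfun_lt hx.1⟩
  · intro h
    have : {x | x ∈ G0 α ∧ pfun α x ∈ (∅ : Set Ordinal)} = ∅ := by
      ext x; simp
    rw [derivU_mem_iff, this] at h
    exact hNu.empty_not_mem h.2
  · intro X hX Y hYα hXY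
    refine ⟨hYα, ?_⟩
    refine hNu.mem_of_superset hX.2 ?_ (fun x hx => G0_subset hx.1)
    intro x hx
    exact ⟨hx.1, hXY hx.2⟩
  · intro X hX Y hY
    refine ⟨fun β hβ => hX.1 hβ.1, ?_⟩
    have := hNu.inter_mem _ hX.2 _ hY.2
    refine hNu.mem_of_superset this ?_ (fun x hx => G0_subset hx.1)
    intro x hx
    exact ⟨hx.1.1, hx.1.2, hx.2.2⟩
  · intro X hXα
    by_cases h : {x | x ∈ G0 α ∧ pfun α x ∈ X} ∈ N
    · exact Or.inl ⟨hXα, h⟩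
    · right
      refine ⟨Set.diff_subset, ?_⟩
      have hc : Dee α \ {x | x ∈ G0 α ∧ pfun α x ∈ X} ∈ N :=
        hNu.compl_mem (fun x hx => hx.1.1) h
      have := hNu.inter_mem _ hc _ hG0
      refine hNu.mem_of_superset this ?_ (fun x hx => G0_subset hx.1)
      rintro x ⟨⟨hxD, hxn⟩, hxG⟩
      refine ⟨hxG, pfun_lt hxD, fun hpx => hxn ⟨hxG, hpx⟩⟩

theorem derivU_cobounded : ∀ γ < α, {β | γ ≤ β ∧ β < α} ∈ derivU α N := by
  intro γ hγ
  refine ⟨fun β hβ => hβ.2, ?_⟩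
  refine hNu.mem_of_superset (fine_G0_mem hcard hNu hNc hNf hNn hγ) ?_ (fun x hx => G0_subset hx.1)
  intro x hx
  exact ⟨hx.1, le_of_lt hx.2, pfun_lt hx.1.1⟩

theorem derivU_normal : IsNormalUltrafilterOn α (derivU α N) := by
  refine ⟨derivU_uf hcard hNu hNc hNf hNn, derivU_cobounded hcard hNu hNc hNf hNn, ?_⟩
  intro f Y hY hreg
  have h0' : (0:Ordinal) < α := by
    obtain ⟨β, hβ⟩ := (derivU_uf hcard hNu hNc hNf hNn).nonempty_of_mem hY
    exact lt_of_le_of_lt (zero_le (a := β)) (hY.1 hβ)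
  have hpos : {x | x ∈ G0 α ∧ 0 < pfun α x} ∈ N := fine_G0_mem hcard hNu hNc hNf hNn h0'
  have hS : {x | x ∈ G0 α ∧ pfun α x ∈ Y} ∩ {x | x ∈ G0 α ∧ 0 < pfun α x} ∈ N :=
    hNu.inter_mem _ hY.2 _ hpos
  set S := {x | x ∈ G0 α ∧ pfun α x ∈ Y} ∩ {x | x ∈ G0 α ∧ 0 < pfun α x} with hSdef
  have hfS : ∀ x ∈ S, f (pfun α x) ∈ x := by
    rintro x ⟨⟨hxG, hxY⟩, -, hx0⟩
    have hreg' : f (pfun α x) < pfun α x := hreg _ hxY hx0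
    exact ((mem_G0_iff hxG).mpr hreg').1
  obtain ⟨T, hT, hTS, γ, hγ⟩ := norm_const (hNn := hNn) hNu _ S hS hfS
  refine ⟨{β | β ∈ Y ∧ f β = γ}, ⟨fun β hβ => hY.1 hβ.1, ?_⟩, γ, fun β hβ => hβ.2⟩
  refine hNu.mem_of_superset hT ?_ (fun x hx => G0_subset hx.1)
  intro x hx
  exact ⟨(hTS hx).1.1, (hTS hx).1.2, hγ x hx⟩

theorem derivU_complete : IsComplete α (Set.Iio α) (derivU α N) := by
  intro δ hδ g hg
  refine ⟨fun β hβ => hβ.1, ?_⟩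
  set fam : Set.Iio δ → Set (Set Ordinal) := fun i => {x | x ∈ G0 α ∧ pfun α x ∈ g i}
    with hfam
  have hfamN : ∀ i, fam i ∈ N := fun i => (hg i).2
  have hQ := hNc δ hδ fam hfamN
  have := hNu.inter_mem _ hQ _ (G0_mem hcard hNu hNc hNf hNn)
  refine hNu.mem_of_superset this ?_ (fun x hx => G0_subset hx.1)
  rintro x ⟨⟨hxD, hxI⟩, hxG⟩
  rw [Set.mem_iInter] at hxI
  refine ⟨hxG, pfun_lt hxD, ?_⟩
  rw [Set.mem_iInter]
  exact fun i => (hxI i).2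

theorem derivU_np : IsNonprincipal (derivU α N) := by
  intro b hb
  have hbα : b < α := hb.1 rfl
  have h1 : {x | x ∈ G0 α ∧ pfun α x ∈ ({b} : Set Ordinal)} ∈ N := hb.2
  have h2 := hNu.inter_mem _ h1 _ (fine_G0_mem hcard hNu hNc hNf hNn hbα)
  obtain ⟨x, hx⟩ := hNu.nonempty_of_mem h2
  have heq : pfun α x = b := hx.1.2
  have h3 : b < pfun α x := hx.2.2
  rw [heq] at h3
  exact lt_irrefl b h3

end DerivedU

section Totality

variable {α : Ordinal.{0}} {N : Set (Set (Set Ordinal.{0}))}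
variable (hcard : IsCard α)
variable (hNu : IsUltrafilterOnSet (Dee α) N) (hNc : IsComplete α (Dee α) N)
variable (hNf : IsFine α (clam α) N) (hNn : IsNormalFineMeasure N)

include hcard hNu hNc hNf hNn

/-- a.e. `x`, every subset of `Iio (p x)` is the trace of a set coded in `x` -/
theorem totality_mem :
    {x | x ∈ G0 α ∧ ∀ Z ⊆ Set.Iio (pfun α x),
      ∃ i ∈ x, ecode α i ∩ Set.Iio (pfun α x) = Z} ∈ N := by
  classical
  by_contra hTT
  set TT := {x | x ∈ G0 α ∧ ∀ Z ⊆ Set.Iio (pfun α x),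
      ∃ i ∈ x, ecode α i ∩ Set.Iio (pfun α x) = Z} with hTTdef
  have hG0 : G0 α ∈ N := G0_mem hcard hNu hNc hNf hNn
  have hS : (Dee α \ TT) ∩ G0 α ∈ N :=
    hNu.inter_mem _ (hNu.compl_mem (fun x hx => G0_subset hx.1) hTT) _ hG0
  set S := (Dee α \ TT) ∩ G0 α with hSdef
  have hwit : ∀ x ∈ S, ∃ Z, Z ⊆ Set.Iio (pfun α x) ∧
      ∀ i ∈ x, ecode α i ∩ Set.Iio (pfun α x) ≠ Z := by
    rintro x ⟨⟨hxD, hxT⟩, hxG⟩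
    have : ¬ (x ∈ G0 α ∧ ∀ Z ⊆ Set.Iio (pfun α x),
        ∃ i ∈ x, ecode α i ∩ Set.Iio (pfun α x) = Z) := hxT
    push_neg at this
    obtain ⟨Z, hZ1, hZ2⟩ := this hxG
    exact ⟨Z, hZ1, fun i hi h => hZ2 i hi h⟩
  set Zf : Set Ordinal → Set Ordinal := fun x =>
    if h : ∃ Z, Z ⊆ Set.Iio (pfun α x) ∧ ∀ i ∈ x, ecode α i ∩ Set.Iio (pfun α x) ≠ Z then
      h.choose else ∅ with hZfdef
  have hZf : ∀ x ∈ S, Zf x ⊆ Set.Iio (pfun α x) ∧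
      ∀ i ∈ x, ecode α i ∩ Set.Iio (pfun α x) ≠ Zf x := by
    intro x hx
    have h := hwit x hx
    rw [hZfdef]
    simp only [dif_pos h]
    exact h.choose_spec
  set Zs : Set Ordinal := {γ | γ < α ∧ {x | x ∈ S ∧ γ < pfun α x ∧ γ ∈ Zf x} ∈ N} with hZsdef
  set ι : Ordinal := cod α Zs with hιdef
  have heι : ecode α ι = Zs := ecode_cod (fun γ hγ => hγ.1)
  have hS' : S ∩ {y | y ∈ sP α (clam α) ∧ ι ∈ y} ∈ N :=
    hNu.inter_mem _ hS _ (hNf ι (cod_lt α Zs))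
  set S' := S ∩ {y | y ∈ sP α (clam α) ∧ ι ∈ y} with hS'def
  have hdiff : ∀ x ∈ S', Zf x ≠ Zs ∩ Set.Iio (pfun α x) := by
    rintro x ⟨hxS, hxD, hxι⟩ heq
    refine (hZf x hxS).2 ι hxι ?_
    rw [heι, heq]
  set df : Set Ordinal → Ordinal := fun x =>
    omin ((Zf x \ (Zs ∩ Set.Iio (pfun α x))) ∪ ((Zs ∩ Set.Iio (pfun α x)) \ Zf x)) with hdfdef
  have hdmem : ∀ x ∈ S', df x ∈
      (Zf x \ (Zs ∩ Set.Iio (pfun α x))) ∪ ((Zs ∩ Set.Iio (pfun α x)) \ Zf x) := by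
    intro x hx
    apply omin_mem
    rcases Set.eq_empty_or_nonempty
      ((Zf x \ (Zs ∩ Set.Iio (pfun α x))) ∪ ((Zs ∩ Set.Iio (pfun α x)) \ Zf x)) with h | h
    · rw [Set.union_empty_iff] at h
      have h1 : Zf x ⊆ Zs ∩ Set.Iio (pfun α x) := Set.diff_eq_empty.mp h.1
      have h2 : Zs ∩ Set.Iio (pfun α x) ⊆ Zf x := Set.diff_eq_empty.mp h.2
      exact absurd (Set.Subset.antisymm h1 h2) (hdiff x hx)
    · exact h
  have hdlt : ∀ x ∈ S', df x < pfun α x := by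
    intro x hx
    rcases hdmem x hx with h | h
    · exact (hZf x hx.1).1 h.1
    · exact h.1.2
  have hdx : ∀ x ∈ S', df x ∈ x := by
    intro x hx
    exact ((mem_G0_iff hx.1.2).mpr (hdlt x hx)).1
  obtain ⟨T, hT, hTS, γ₀, hγ₀⟩ := norm_const (hNn := hNn) hNu df S' hS' hdx
  obtain ⟨x₂, hx₂⟩ := hNu.nonempty_of_mem hT
  have hγ₀px₂ : γ₀ < pfun α x₂ := by
    rw [← hγ₀ x₂ hx₂]
    exact hdlt x₂ (hTS hx₂)
  have hγ₀α : γ₀ < α := lt_trans hγ₀px₂ (pfun_lt (hTS hx₂).1.2.1)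
  by_cases hY : {x | x ∈ S ∧ γ₀ < pfun α x ∧ γ₀ ∈ Zf x} ∈ N
  · -- γ₀ ∈ Zs
    have hγ₀Zs : γ₀ ∈ Zs := ⟨hγ₀α, hY⟩
    have := hNu.inter_mem _ hT _ hY
    obtain ⟨x, hx⟩ := hNu.nonempty_of_mem this
    have hd := hdmem x (hTS hx.1)
    rw [hγ₀ x hx.1] at hd
    rcases hd with h | h
    · exact h.2 ⟨hγ₀Zs, hx.2.2.1⟩
    · exact h.2 hx.2.2.2
  · -- γ₀ ∉ Zs
    have hγ₀Zs : γ₀ ∉ Zs := fun h => hY h.2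
    have hcompl : Dee α \ {x | x ∈ S ∧ γ₀ < pfun α x ∧ γ₀ ∈ Zf x} ∈ N :=
      hNu.compl_mem (fun x hx => (hx.1.1).1) hY
    have h1 := hNu.inter_mem _ hT _ hcompl
    have h2 := hNu.inter_mem _ h1 _ (fine_G0_mem hcard hNu hNc hNf hNn hγ₀α)
    obtain ⟨x, hx⟩ := hNu.nonempty_of_mem h2
    have hd := hdmem x (hTS hx.1.1)
    rw [hγ₀ x hx.1.1] at hd
    have hγ₀Zfx : γ₀ ∉ Zf x := by
      intro hmem
      exact hx.1.2.2 ⟨(hTS hx.1.1).1, hx.2.2, hmem⟩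
    rcases hd with h | h
    · exact hγ₀Zfx h.1
    · exact hγ₀Zs h.1.1

end Totality

section Closure

variable {α : Ordinal.{0}} {N : Set (Set (Set Ordinal.{0}))}
variable (hcard : IsCard α)
variable (hNu : IsUltrafilterOnSet (Dee α) N) (hNc : IsComplete α (Dee α) N)
variable (hNf : IsFine α (clam α) N) (hNn : IsNormalFineMeasure N)

include hcard hNu hNc hNf hNn

/-- a.e. `x` is closed under taking codes of small intersections of sets coded in `x` -/
theorem closure_mem :
    {x | x ∈ G0 α ∧ ∀ δ < pfun α x, ∀ c : Ordinal → Ordinal, (∀ j < δ, c j ∈ x) →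
      cod α (Set.Iio α ∩ ⋂ j : Set.Iio δ, ecode α (c j.val)) ∈ x} ∈ N := by
  classical
  by_contra hCL
  set CL := {x | x ∈ G0 α ∧ ∀ δ < pfun α x, ∀ c : Ordinal → Ordinal, (∀ j < δ, c j ∈ x) →
      cod α (Set.Iio α ∩ ⋂ j : Set.Iio δ, ecode α (c j.val)) ∈ x} with hCLdef
  have hG0 : G0 α ∈ N := G0_mem hcard hNu hNc hNf hNn
  have hS : (Dee α \ CL) ∩ G0 α ∈ N :=
    hNu.inter_mem _ (hNu.compl_mem (fun x hx => G0_subset hx.1) hCL) _ hG0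
  set S := (Dee α \ CL) ∩ G0 α with hSdef
  have hwit : ∀ x ∈ S, ∃ δ, δ < pfun α x ∧ ∃ c : Ordinal → Ordinal, (∀ j < δ, c j ∈ x) ∧
      cod α (Set.Iio α ∩ ⋂ j : Set.Iio δ, ecode α (c j.val)) ∉ x := by
    rintro x ⟨⟨hxD, hxC⟩, hxG⟩
    have : ¬ (x ∈ G0 α ∧ ∀ δ < pfun α x, ∀ c : Ordinal → Ordinal, (∀ j < δ, c j ∈ x) →
        cod α (Set.Iio α ∩ ⋂ j : Set.Iio δ, ecode α (c j.val)) ∈ x) := hxC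
    push_neg at this
    exact this hxG
  set deltaf : Set Ordinal → Ordinal := fun x =>
    if h : ∃ δ, δ < pfun α x ∧ ∃ c : Ordinal → Ordinal, (∀ j < δ, c j ∈ x) ∧
      cod α (Set.Iio α ∩ ⋂ j : Set.Iio δ, ecode α (c j.val)) ∉ x then h.choose else 0
    with hdeltadef
  set cf : Set Ordinal → (Ordinal → Ordinal) := fun x =>
    if h : ∃ c : Ordinal → Ordinal, (∀ j < deltaf x, c j ∈ x) ∧
      cod α (Set.Iio α ∩ ⋂ j : Set.Iio (deltaf x), ecode α (c j.val)) ∉ x then h.choose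
    else fun _ => 0 with hcfdef
  have hdelta : ∀ x ∈ S, deltaf x < pfun α x ∧ ∃ c : Ordinal → Ordinal,
      (∀ j < deltaf x, c j ∈ x) ∧
      cod α (Set.Iio α ∩ ⋂ j : Set.Iio (deltaf x), ecode α (c j.val)) ∉ x := by
    intro x hx
    have h := hwit x hx
    have he : deltaf x = h.choose := by rw [hdeltadef]; exact dif_pos h
    rw [he]
    exact h.choose_spec
  have hcf : ∀ x ∈ S, (∀ j < deltaf x, cf x j ∈ x) ∧
      cod α (Set.Iio α ∩ ⋂ j : Set.Iio (deltaf x), ecode α (cf x j.val)) ∉ x := by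
    intro x hx
    have h := (hdelta x hx).2
    have he : cf x = h.choose := by rw [hcfdef]; exact dif_pos h
    rw [he]
    exact h.choose_spec
  have hdx : ∀ x ∈ S, deltaf x ∈ x := by
    intro x hx
    exact ((mem_G0_iff hx.2).mpr (hdelta x hx).1).1
  obtain ⟨T₁, hT₁, hT₁S, δ₀, hδ₀⟩ := norm_const (hNn := hNn) hNu deltaf S hS hdx
  obtain ⟨x₁, hx₁⟩ := hNu.nonempty_of_mem hT₁
  have hδ₀α : δ₀ < α := by
    have h1 : deltaf x₁ < pfun α x₁ := (hdelta x₁ (hT₁S hx₁)).1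
    rw [hδ₀ x₁ hx₁] at h1
    exact lt_trans h1 (pfun_lt (hT₁S hx₁).2.1)
  -- press down each coordinate
  have hcoord : ∀ j : Set.Iio δ₀, ∃ T ∈ N, T ⊆ T₁ ∧ ∃ γ, ∀ x ∈ T, cf x j.val = γ := by
    intro j
    refine norm_const (hNn := hNn) hNu (fun x => cf x j.val) T₁ hT₁ ?_
    intro x hx
    have h1 := (hcf x (hT₁S hx)).1
    refine h1 j.val ?_
    rw [hδ₀ x hx]
    exact j.2
  choose Tf hTfN hTfsub gam hgam using hcoord
  have hQ := hNc δ₀ hδ₀α Tf hTfN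
  set ι : Ordinal := cod α (Set.Iio α ∩ ⋂ j : Set.Iio δ₀, ecode α (gam j)) with hιdef
  have hιlt : ι < clam α := cod_lt _ _
  have h1 := hNu.inter_mem _ hQ _ hT₁
  have h2 := hNu.inter_mem _ h1 _ (hNf ι hιlt)
  obtain ⟨x, hx⟩ := hNu.nonempty_of_mem h2
  obtain ⟨⟨⟨hxD, hxI⟩, hxT₁⟩, hxD2, hxι⟩ := hx
  rw [Set.mem_iInter] at hxI
  have hδx : deltaf x = δ₀ := hδ₀ x hxT₁
  have hbad := (hcf x (hT₁S hxT₁)).2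
  have hgameq : ∀ j : Set.Iio (deltaf x), cf x j.val = gam ⟨j.val, hδx ▸ j.2⟩ := by
    intro j
    exact hgam ⟨j.val, hδx ▸ j.2⟩ x (hxI _)
  have hseteq : (Set.Iio α ∩ ⋂ j : Set.Iio (deltaf x), ecode α (cf x j.val)) =
      (Set.Iio α ∩ ⋂ j : Set.Iio δ₀, ecode α (gam j)) := by
    subst hδx
    refine congrArg (Set.Iio α ∩ ·) ?_
    exact Set.iInter_congr fun j => by rw [hgameq j]
  rw [hseteq] at hbad
  exact hbad hxι

end Closure

section BuildMeasure

variable {α : Ordinal.{0}} {u : Set (Set Ordinal.{0})}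

/-- From a complete nonprincipal ultrafilter `u` on `α` and a set `x` of codes which is
sufficiently closed, build a complete nonprincipal ultrafilter on `π`. -/
theorem build_measure (huf : IsUltrafilterOn α u)
    (hucomp : IsComplete α (Set.Iio α) u) (hunp : IsNonprincipal u)
    {x : Set Ordinal} {π : Ordinal} (hπα : π < α)
    (hxT : ∀ Z ⊆ Set.Iio π, ∃ i ∈ x, ecode α i ∩ Set.Iio π = Z)
    (hxC : ∀ δ < π, ∀ c : Ordinal → Ordinal, (∀ j < δ, c j ∈ x) →
      cod α (Set.Iio α ∩ ⋂ j : Set.Iio δ, ecode α (c j.val)) ∈ x)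
    (hx5 : ∀ i ∈ x, cod α (Set.Iio α \ ecode α i) ∈ x)
    (hx6 : ∀ i ∈ x, ∀ j ∈ x, cod α (ecode α i ∩ ecode α j) ∈ x)
    (hx7 : ∀ i ∈ x, ecode α i ∈ u → omin (ecode α i) < π)
    (hx8 : ∀ i ∈ x, ecode α i ∈ u → omin (ecode α i \ {omin (ecode α i)}) < π)
    (hxu : cod α (Set.Iio α) ∈ x) :
    ∃ W, IsUltrafilterOn π W ∧ IsNonprincipal W ∧ IsComplete π (Set.Iio π) W := by
  classical
  set W : Set (Set Ordinal) := {Z | Z ⊆ Set.Iio π ∧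
    ∃ i ∈ x, ecode α i ∈ u ∧ ecode α i ∩ Set.Iio π = Z} with hWdef
  -- members of W are nonempty
  have hWne : ∀ Z ∈ W, Z.Nonempty := by
    rintro Z ⟨hZsub, i, hix, hiu, htr⟩
    have hne : (ecode α i).Nonempty := huf.nonempty_of_mem hiu
    have ha : omin (ecode α i) ∈ ecode α i := omin_mem hne
    exact ⟨omin (ecode α i), htr ▸ ⟨ha, hx7 i hix hiu⟩⟩
  have hWuniv : Set.Iio π ∈ W := by
    refine ⟨Set.Subset.rfl, cod α (Set.Iio α), hxu, ?_, ?_⟩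
    · rw [ecode_cod Set.Subset.rfl]
      exact huf.univ_mem
    · rw [ecode_cod Set.Subset.rfl]
      exact Set.inter_eq_self_of_subset_right (Set.Iio_subset_Iio hπα.le)
  have hWinter : ∀ X ∈ W, ∀ Y ∈ W, X ∩ Y ∈ W := by
    rintro X ⟨hXsub, i, hix, hiu, hitr⟩ Y ⟨hYsub, j, hjx, hju, hjtr⟩
    refine ⟨fun β hβ => hXsub hβ.1, cod α (ecode α i ∩ ecode α j), hx6 i hix j hjx, ?_, ?_⟩
    · rw [ecode_cod (fun β hβ => ecode_subset α i hβ.1)]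
      exact huf.inter_mem _ hiu _ hju
    · rw [ecode_cod (fun β hβ => ecode_subset α i hβ.1)]
      rw [← hitr, ← hjtr]
      ext β
      simp only [Set.mem_inter_iff, Set.mem_Iio]
      tauto
  have hWmoc : ∀ Z, Z ⊆ Set.Iio π → (Z ∈ W ∨ (Set.Iio π \ Z) ∈ W) := by
    intro Z hZsub
    obtain ⟨i, hix, htr⟩ := hxT Z hZsub
    by_cases hiu : ecode α i ∈ u
    · exact Or.inl ⟨hZsub, i, hix, hiu, htr⟩
    · right
      refine ⟨Set.diff_subset, cod α (Set.Iio α \ ecode α i), hx5 i hix, ?_, ?_⟩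
      · rw [ecode_cod Set.diff_subset]
        exact huf.compl_mem (ecode_subset α i) hiu
      · rw [ecode_cod Set.diff_subset]
        rw [← htr]
        ext β
        simp only [Set.mem_inter_iff, Set.mem_diff, Set.mem_Iio]
        constructor
        · rintro ⟨⟨hβα, hβi⟩, hβπ⟩
          exact ⟨hβπ, fun h => hβi h.1⟩
        · rintro ⟨hβπ, hβZ⟩
          exact ⟨⟨lt_trans hβπ hπα, fun h => hβZ ⟨h, hβπ⟩⟩, hβπ⟩
  have hWsuper : ∀ X ∈ W, ∀ Y, Y ⊆ Set.Iio π → X ⊆ Y → Y ∈ W := by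
    intro X hX Y hYsub hXY
    rcases hWmoc Y hYsub with h | h
    · exact h
    · exfalso
      obtain ⟨β, hβ⟩ := hWne _ (hWinter X hX _ h)
      exact hβ.2.2 (hXY hβ.1)
  refine ⟨W, ⟨fun Z hZ => hZ.1, hWuniv, ?_, hWsuper, hWinter, hWmoc⟩, ?_, ?_⟩
  · -- empty not mem
    intro h
    obtain ⟨β, hβ⟩ := hWne _ h
    exact hβ
  · -- nonprincipal
    rintro b ⟨hbsub, i, hix, hiu, htr⟩
    set a := omin (ecode α i) with hadef
    have hne : (ecode α i).Nonempty := huf.nonempty_of_mem hiu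
    have ha : a ∈ ecode α i := omin_mem hne
    obtain ⟨c₁, hc₁, c₂, hc₂, hcne⟩ := two_mem huf hunp hiu
    have hdne : (ecode α i \ {a}).Nonempty := by
      by_cases h : c₁ = a
      · exact ⟨c₂, hc₂, by simp [h ▸ hcne.symm]⟩
      · exact ⟨c₁, hc₁, h⟩
    set a' := omin (ecode α i \ {a}) with ha'def
    have ha' : a' ∈ ecode α i \ {a} := omin_mem hdne
    have haπ : a < π := hx7 i hix hiu
    have ha'π : a' < π := hx8 i hix hiu
    have hab : a ∈ ({b} : Set Ordinal) := htr ▸ (⟨ha, haπ⟩ : a ∈ ecode α i ∩ Set.Iio π)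
    have ha'b : a' ∈ ({b} : Set Ordinal) := htr ▸ (⟨ha'.1, ha'π⟩ : a' ∈ ecode α i ∩ Set.Iio π)
    rw [Set.mem_singleton_iff] at hab ha'b
    exact ha'.2 (by rw [ha'b, ← hab]; rfl)
  · -- complete
    intro δ hδ g hg
    have hch : ∀ j : Set.Iio δ, ∃ i, i ∈ x ∧ ecode α i ∈ u ∧ ecode α i ∩ Set.Iio π = g j := by
      intro j
      obtain ⟨hs, i, h1, h2, h3⟩ := hg j
      exact ⟨i, h1, h2, h3⟩
    choose ci hc1 hc2 hc3 using hch
    set c : Ordinal → Ordinal := fun o => if h : o < δ then ci ⟨o, h⟩ else 0 with hcdef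
    have hcx : ∀ j < δ, c j ∈ x := by
      intro j hj
      rw [hcdef]
      simp only [dif_pos hj]
      exact hc1 _
    have hι : cod α (Set.Iio α ∩ ⋂ j : Set.Iio δ, ecode α (c j.val)) ∈ x :=
      hxC δ hδ c hcx
    have hceq : ∀ j : Set.Iio δ, c j.val = ci j := by
      intro j
      rw [hcdef]
      simp only [Subtype.coe_eta]
      exact dif_pos j.2
    have hseteq : (Set.Iio α ∩ ⋂ j : Set.Iio δ, ecode α (c j.val)) =
        (Set.Iio α ∩ ⋂ j : Set.Iio δ, ecode α (ci j)) := by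
      refine congrArg (Set.Iio α ∩ ·) (Set.iInter_congr fun j => by rw [hceq j])
    rw [hseteq] at hι
    have hWset : (Set.Iio α ∩ ⋂ j : Set.Iio δ, ecode α (ci j)) ∈ u :=
      hucomp δ (lt_trans hδ hπα) (fun j => ecode α (ci j)) hc2
    refine ⟨Set.inter_subset_left, cod α (Set.Iio α ∩ ⋂ j : Set.Iio δ, ecode α (ci j)),
      hι, ?_, ?_⟩
    · rw [ecode_cod Set.inter_subset_left]
      exact hWset
    · rw [ecode_cod Set.inter_subset_left]
      ext β
      simp only [Set.mem_inter_iff, Set.mem_iInter, Set.mem_Iio]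
      constructor
      · rintro ⟨⟨hβα, hβi⟩, hβπ⟩
        refine ⟨hβπ, fun j => ?_⟩
        rw [← hc3 j]
        exact ⟨hβi j, hβπ⟩
      · rintro ⟨hβπ, hβg⟩
        refine ⟨⟨lt_trans hβπ hπα, fun j => ?_⟩, hβπ⟩
        have := hβg j
        rw [← hc3 j] at this
        exact this.1

end BuildMeasure

section Crux

variable {α : Ordinal.{0}} {N : Set (Set (Set Ordinal.{0}))}
variable (hcard : IsCard α) (hα : Ordinal.omega0 < α)
variable (hNu : IsUltrafilterOnSet (Dee α) N) (hNc : IsComplete α (Dee α) N)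
variable (hNf : IsFine α (clam α) N) (hNn : IsNormalFineMeasure N)

include hcard hα hNu hNc hNf hNn

theorem meas_mem : {β | β < α ∧ IsMeasurable β} ∈ derivU α N := by
  classical
  have huf := derivU_uf hcard hNu hNc hNf hNn
  have hucomp := derivU_complete hcard hNu hNc hNf hNn
  have hunp := derivU_np hcard hNu hNc hNf hNn
  have hunorm := derivU_normal hcard hNu hNc hNf hNn
  set u := derivU α N with hudef
  have hG0 : G0 α ∈ N := G0_mem hcard hNu hNc hNf hNn
  have hTT := totality_mem hcard hNu hNc hNf hNn
  have hCL := closure_mem hcard hNu hNc hNf hNn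
  have hD5 : {y | y ∈ sP α (clam α) ∧ ∀ i ∈ y,
      y ∈ {z | z ∈ sP α (clam α) ∧ cod α (Set.Iio α \ ecode α i) ∈ z}} ∈ N :=
    diag_mem hNu hNn _ (fun i => hNf _ (cod_lt _ _))
  have hD6 : {y | y ∈ sP α (clam α) ∧ ∀ i ∈ y,
      y ∈ {z | z ∈ sP α (clam α) ∧ ∀ j ∈ z,
        z ∈ {w | w ∈ sP α (clam α) ∧ cod α (ecode α i ∩ ecode α j) ∈ w}}} ∈ N :=
    diag_mem hNu hNn _ (fun i => diag_mem hNu hNn _ (fun j => hNf _ (cod_lt _ _)))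
  set X7 : Ordinal → Set (Set Ordinal) := fun i =>
    if ecode α i ∈ u then {y | y ∈ G0 α ∧ omin (ecode α i) < pfun α y}
    else sP α (clam α) with hX7def
  have hX7 : ∀ i, X7 i ∈ N := by
    intro i
    by_cases h : ecode α i ∈ u
    · simp only [hX7def, if_pos h]
      refine fine_G0_mem hcard hNu hNc hNf hNn ?_
      exact (ecode_subset α i) (omin_mem (huf.nonempty_of_mem h))
    · simp only [hX7def, if_neg h]
      exact hNu.univ_mem
  have hD7 := diag_mem hNu hNn X7 hX7
  set X8 : Ordinal → Set (Set Ordinal) := fun i =>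
    if h : ecode α i ∈ u then
      {y | y ∈ G0 α ∧ omin (ecode α i \ {omin (ecode α i)}) < pfun α y}
    else sP α (clam α) with hX8def
  have hdiffne : ∀ i, ecode α i ∈ u → (ecode α i \ {omin (ecode α i)}).Nonempty := by
    intro i h
    obtain ⟨c₁, hc₁, c₂, hc₂, hcne⟩ := two_mem huf hunp h
    by_cases hc : c₁ = omin (ecode α i)
    · exact ⟨c₂, hc₂, by simp [hc ▸ hcne.symm]⟩
    · exact ⟨c₁, hc₁, hc⟩
  have hX8 : ∀ i, X8 i ∈ N := by
    intro i
    by_cases h : ecode α i ∈ u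
    · simp only [hX8def, dif_pos h]
      refine fine_G0_mem hcard hNu hNc hNf hNn ?_
      exact (ecode_subset α i) ((omin_mem (hdiffne i h)).1)
    · simp only [hX8def, dif_neg h]
      exact hNu.univ_mem
  have hD8 := diag_mem hNu hNn X8 hX8
  have hUv : {y | y ∈ sP α (clam α) ∧ cod α (Set.Iio α) ∈ y} ∈ N := hNf _ (cod_lt _ _)
  have hPc : {x | x ∈ G0 α ∧ pfun α x ∈ {β | β < α ∧ IsCard β}} ∈ N :=
    (isCard_mem hunorm hucomp hunp hcard hα).2
  have hPω : {x | x ∈ G0 α ∧ Ordinal.omega0 < pfun α x} ∈ N :=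
    fine_G0_mem hcard hNu hNc hNf hNn hα
  -- the big intersection
  have hGG := hNu.inter_mem _ (hNu.inter_mem _ (hNu.inter_mem _ (hNu.inter_mem _
    (hNu.inter_mem _ (hNu.inter_mem _ (hNu.inter_mem _ (hNu.inter_mem _
      hTT _ hCL) _ hD5) _ hD6) _ (diag_mem hNu hNn X7 hX7)) _ hD8) _ hUv) _ hPc) _ hPω
  refine ⟨fun β hβ => hβ.1, ?_⟩
  refine hNu.mem_of_superset hGG ?_ (fun x hx => G0_subset hx.1)
  rintro x ⟨⟨⟨⟨⟨⟨⟨⟨hxTT, hxCL⟩, hx5⟩, hx6⟩, hx7⟩, hx8⟩, hxu⟩, hxpc⟩, hxpω⟩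
  have hxG0 : x ∈ G0 α := hxTT.1
  refine ⟨hxG0, pfun_lt hxG0.1, hxpc.2.2, hxpω.2, ?_⟩
  refine build_measure huf hucomp hunp (pfun_lt hxG0.1) hxTT.2 hxCL.2
    (fun i hi => (hx5.2 i hi).2) (fun i hi j hj => ((hx6.2 i hi).2 j hj).2) ?_ ?_ hxu.2
  · intro i hi hiu
    have h2 := hx7.2 i hi
    simp only [hX7def] at h2
    rw [if_pos hiu] at h2
    exact h2.2
  · intro i hi hiu
    have h2 := hx8.2 i hi
    simp only [hX8def] at h2
    rw [dif_pos hiu] at h2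
    exact h2.2

end Crux

/-- the crux: a supercompact cardinal has a normal, complete, nonprincipal ultrafilter
concentrating on measurable cardinals; in particular it is measurable. -/
theorem crux_of_sc {α : Ordinal.{0}} (hsc : IsSupercompact α) :
    ∃ u, IsNormalUltrafilterOn α u ∧ IsComplete α (Set.Iio α) u ∧ IsNonprincipal u ∧
      {β | β < α ∧ IsMeasurable β} ∈ u := by
  have hα : Ordinal.omega0 < α := sc_omega0_lt hsc
  obtain ⟨hcard, hmeas⟩ := hsc
  obtain ⟨N, hNu, hNc, hNf, hNn⟩ := hmeas (clam α) (isCard_clam α) (le_clam hcard)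
  exact ⟨derivU α N, derivU_normal hcard hNu hNc hNf hNn,
    derivU_complete hcard hNu hNc hNf hNn, derivU_np hcard hNu hNc hNf hNn,
    meas_mem hcard hα hNu hNc hNf hNn⟩

theorem isMeasurable_of_sc {α : Ordinal.{0}} (hsc : IsSupercompact α) : IsMeasurable α := by
  obtain ⟨u, hnorm, hcomp, hnp, hmem⟩ := crux_of_sc hsc
  exact ⟨hsc.1, sc_omega0_lt hsc, u, hnorm.1, hnp, hcomp⟩

/-! ### Menas: a measurable limit of supercompacts is compact -/

theorem compact_of_meas_limsc {α : Ordinal.{0}} (hmeas : IsMeasurable α)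
    (hub : ∀ β < α, ∃ γ, β < γ ∧ γ < α ∧ IsSupercompact γ) : IsCompact α := by
  classical
  obtain ⟨hcard, hω, u, huf, hunp, hucomp⟩ := hmeas
  refine ⟨hcard, hω, ?_⟩
  intro lam hlamcard hlamle
  have hcob := cobounded_mem huf hucomp hunp
  -- choose supercompacts
  have hch : ∀ β : Ordinal, ∃ δ, (β < α → (β < δ ∧ δ < α ∧ IsSupercompact δ)) := by
    intro β
    by_cases h : β < α
    · obtain ⟨γ, h1, h2, h3⟩ := hub β h
      exact ⟨γ, fun _ => ⟨h1, h2, h3⟩⟩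
    · exact ⟨0, fun hc => absurd hc h⟩
  choose δf hδf using hch
  have hch2 : ∀ β, ∃ G, β < α → (IsUltrafilterOnSet (sP (δf β) lam) G ∧
      IsComplete (δf β) (sP (δf β) lam) G ∧ IsFine (δf β) lam G) := by
    intro β
    by_cases h : β < α
    · obtain ⟨h1, h2, hsc⟩ := hδf β h
      obtain ⟨G, hG1, hG2, hG3, _⟩ := hsc.2 lam hlamcard (le_trans h2.le hlamle)
      exact ⟨G, fun _ => ⟨hG1, hG2, hG3⟩⟩
    · exact ⟨∅, fun hc => absurd hc h⟩
  choose Gf hGf using hch2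
  set F : Set (Set (Set Ordinal)) :=
    {X | X ⊆ sP α lam ∧ {β | β < α ∧ X ∩ sP (δf β) lam ∈ Gf β} ∈ u} with hFdef
  have hsub : ∀ β < α, sP (δf β) lam ⊆ sP α lam := fun β hβ => sP_mono (hδf β hβ).2.1.le
  have hFuniv : sP α lam ∈ F := by
    refine ⟨Set.Subset.rfl, ?_⟩
    have : {β | β < α ∧ sP α lam ∩ sP (δf β) lam ∈ Gf β} = Set.Iio α := by
      ext β
      simp only [Set.mem_setOf_eq, Set.mem_Iio]
      constructor
      · exact fun h => h.1
      · intro hβ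
        refine ⟨hβ, ?_⟩
        rw [Set.inter_eq_self_of_subset_right (hsub β hβ)]
        exact (hGf β hβ).1.univ_mem
    rw [this]
    exact huf.univ_mem
  refine ⟨F, ⟨fun X hX => hX.1, hFuniv, ?_, ?_, ?_, ?_⟩, ?_, ?_⟩
  · -- empty not mem
    rintro ⟨-, hin⟩
    have : {β | β < α ∧ (∅ : Set (Set Ordinal)) ∩ sP (δf β) lam ∈ Gf β} = ∅ := by
      ext β
      simp only [Set.mem_setOf_eq, Set.mem_empty_iff_false, iff_false, not_and]
      intro hβ h
      rw [Set.empty_inter] at h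
      exact (hGf β hβ).1.empty_not_mem h
    rw [this] at hin
    exact huf.empty_not_mem hin
  · -- superset
    rintro X ⟨hXsub, hXin⟩ Y hYsub hXY
    refine ⟨hYsub, ?_⟩
    refine huf.mem_of_superset hXin ?_ (fun β hβ => hβ.1)
    rintro β ⟨hβ, hβG⟩
    refine ⟨hβ, ?_⟩
    exact (hGf β hβ).1.mem_of_superset hβG
      (fun z hz => ⟨hXY hz.1, hz.2⟩) (fun z hz => hz.2)
  · -- inter
    rintro X ⟨hXsub, hXin⟩ Y ⟨hYsub, hYin⟩
    refine ⟨fun z hz => hXsub hz.1, ?_⟩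
    refine huf.mem_of_superset (huf.inter_mem _ hXin _ hYin) ?_ (fun β hβ => hβ.1)
    rintro β ⟨⟨hβ, hX⟩, -, hY⟩
    refine ⟨hβ, ?_⟩
    have := (hGf β hβ).1.inter_mem _ hX _ hY
    have heq : X ∩ sP (δf β) lam ∩ (Y ∩ sP (δf β) lam) = X ∩ Y ∩ sP (δf β) lam := by
      ext z
      simp only [Set.mem_inter_iff]
      tauto
    rwa [heq] at this
  · -- mem or compl
    intro X hXsub
    by_cases h : {β | β < α ∧ X ∩ sP (δf β) lam ∈ Gf β} ∈ u
    · exact Or.inl ⟨hXsub, h⟩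
    · right
      refine ⟨Set.diff_subset, ?_⟩
      have hc : Set.Iio α \ {β | β < α ∧ X ∩ sP (δf β) lam ∈ Gf β} ∈ u :=
        huf.compl_mem (fun β hβ => hβ.1) h
      refine huf.mem_of_superset hc ?_ (fun β hβ => hβ.1)
      rintro β ⟨hβ, hβn⟩
      refine ⟨hβ, ?_⟩
      have hnot : X ∩ sP (δf β) lam ∉ Gf β := fun hc' => hβn ⟨hβ, hc'⟩
      have := (hGf β hβ).1.compl_mem (Set.inter_subset_right) hnot
      have heq : sP (δf β) lam \ (X ∩ sP (δf β) lam) =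
          (sP α lam \ X) ∩ sP (δf β) lam := by
        ext z
        simp only [Set.mem_diff, Set.mem_inter_iff]
        constructor
        · rintro ⟨hz, hzn⟩
          exact ⟨⟨hsub β hβ hz, fun hzX => hzn ⟨hzX, hz⟩⟩, hz⟩
        · rintro ⟨⟨hz, hzn⟩, hz2⟩
          exact ⟨hz2, fun hc'' => hzn hc''.1⟩
      rwa [heq] at this
  · -- complete
    intro δ' hδ' g hg
    refine ⟨Set.inter_subset_left, ?_⟩
    set fam : Set.Iio δ' → Set Ordinal := fun j => {β | β < α ∧ g j ∩ sP (δf β) lam ∈ Gf β}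
      with hfam
    have hQ := hucomp δ' hδ' fam (fun j => (hg j).2)
    have h2 := huf.inter_mem _ hQ _ (hcob δ' hδ')
    refine huf.mem_of_superset h2 ?_ (fun β hβ => hβ.1)
    rintro β ⟨⟨hβα, hβI⟩, hδ'β, -⟩
    rw [Set.mem_iInter] at hβI
    refine ⟨hβα, ?_⟩
    have hδδ : δ' < δf β := lt_of_le_of_lt hδ'β (hδf β hβα).1
    have hGc := (hGf β hβα).2.1 δ' hδδ (fun j => g j ∩ sP (δf β) lam)
      (fun j => (hβI j).2)
    have heq : sP (δf β) lam ∩ ⋂ j : Set.Iio δ', (g j ∩ sP (δf β) lam) =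
        (sP α lam ∩ ⋂ j : Set.Iio δ', g j) ∩ sP (δf β) lam := by
      ext z
      simp only [Set.mem_inter_iff, Set.mem_iInter]
      constructor
      · rintro ⟨hz, hzj⟩
        exact ⟨⟨hsub β hβα hz, fun j => (hzj j).1⟩, hz⟩
      · rintro ⟨⟨hz1, hz2⟩, hz3⟩
        exact ⟨hz3, fun j => ⟨hz2 j, hz3⟩⟩
    rwa [heq] at hGc
  · -- fine
    intro i hi
    refine ⟨fun x hx => hx.1, ?_⟩
    have : {β | β < α ∧ {x | x ∈ sP α lam ∧ i ∈ x} ∩ sP (δf β) lam ∈ Gf β} = Set.Iio α := by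
      ext β
      simp only [Set.mem_setOf_eq, Set.mem_Iio]
      constructor
      · exact fun h => h.1
      · intro hβ
        refine ⟨hβ, ?_⟩
        have heq : {x | x ∈ sP α lam ∧ i ∈ x} ∩ sP (δf β) lam =
            {x | x ∈ sP (δf β) lam ∧ i ∈ x} := by
          ext z
          simp only [Set.mem_inter_iff, Set.mem_setOf_eq]
          constructor
          · rintro ⟨⟨-, hzi⟩, hz⟩
            exact ⟨hz, hzi⟩
          · rintro ⟨hz, hzi⟩
            exact ⟨⟨hsub β hβ hz, hzi⟩, hz⟩
        rw [heq]
        exact (hGf β hβ).2.2 i hi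
    rw [this]
    exact huf.univ_mem

/-! ### the set of limits of supercompacts is in every normal ultrafilter -/

theorem succ_lt_of_meas {κ : Ordinal.{0}} (h : IsMeasurable κ) : ∀ a < κ, a + 1 < κ := by
  intro a ha
  have hℵ : Cardinal.aleph0 ≤ κ.card := by
    rw [← Ordinal.card_omega0]
    exact Ordinal.card_le_card h.2.1.le
  have hlim : Order.IsSuccLimit κ := h.1 ▸ Cardinal.isSuccLimit_ord hℵ
  rw [Ordinal.add_one_eq_succ]
  exact hlim.succ_lt ha

theorem limsc_mem {κ : Ordinal.{0}} {U : Set (Set Ordinal)}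
    (hU : IsNormalUltrafilterOn κ U) (hsucc : ∀ a < κ, a + 1 < κ)
    (hub : ∀ β < κ, ∃ γ, β < γ ∧ γ < κ ∧ IsSupercompact γ) :
    {α | α < κ ∧ ∀ β < α, ∃ γ, β < γ ∧ γ < α ∧ IsSupercompact γ} ∈ U := by
  classical
  obtain ⟨hUf, hUcob, hUnorm⟩ := hU
  by_contra h
  have hS : Set.Iio κ \ {α | α < κ ∧ ∀ β < α, ∃ γ, β < γ ∧ γ < α ∧ IsSupercompact γ} ∈ U :=
    hUf.compl_mem (fun α hα => hα.1) h
  set S := Set.Iio κ \ {α | α < κ ∧ ∀ β < α, ∃ γ, β < γ ∧ γ < α ∧ IsSupercompact γ} with hSdef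
  have hwit : ∀ x ∈ S, {β | β < x ∧ ¬∃ γ, β < γ ∧ γ < x ∧ IsSupercompact γ}.Nonempty := by
    rintro x ⟨hx, hxn⟩
    have : ¬ (x < κ ∧ ∀ β < x, ∃ γ, β < γ ∧ γ < x ∧ IsSupercompact γ) := hxn
    push_neg at this
    obtain ⟨β, hβ1, hβ2⟩ := this hx
    exact ⟨β, hβ1, by push_neg; exact fun γ h1 h2 => hβ2 γ h1 h2⟩
  set f : Ordinal → Ordinal := fun x =>
    omin {β | β < x ∧ ¬∃ γ, β < γ ∧ γ < x ∧ IsSupercompact γ} with hfdef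
  have hreg : ∀ x ∈ S, 0 < x → f x < x := fun x hx _ => (omin_mem (hwit x hx)).1
  obtain ⟨T, hT, β₀, hβ₀⟩ := hUnorm f S hS hreg
  have hTS : T ∩ S ∈ U := hUf.inter_mem _ hT _ hS
  obtain ⟨x₁, hx₁⟩ := hUf.nonempty_of_mem hTS
  have hβ₀x₁ : β₀ < x₁ := by
    rw [← hβ₀ x₁ hx₁.1]
    exact (omin_mem (hwit x₁ hx₁.2)).1
  have hβ₀κ : β₀ < κ := lt_trans hβ₀x₁ hx₁.2.1
  obtain ⟨γ', hγ'1, hγ'2, hγ'3⟩ := hub β₀ hβ₀κ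
  have hγ'κ : γ' + 1 < κ := hsucc γ' hγ'2
  have h2 : T ∩ S ∩ {β | γ' + 1 ≤ β ∧ β < κ} ∈ U := hUf.inter_mem _ hTS _ (hUcob _ hγ'κ)
  obtain ⟨x, hx⟩ := hUf.nonempty_of_mem h2
  have hfx : f x ∈ {β | β < x ∧ ¬∃ γ, β < γ ∧ γ < x ∧ IsSupercompact γ} :=
    omin_mem (hwit x hx.1.2)
  rw [hβ₀ x hx.1.1] at hfx
  refine hfx.2 ⟨γ', hγ'1, ?_, hγ'3⟩
  calc γ' < γ' + 1 := by rw [Ordinal.add_one_eq_succ]; exact Order.lt_succ γ'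
  _ ≤ x := hx.2.1

/-! ### the main theorem -/

theorem main_aux : ∀ κ : Ordinal.{0}, IsMeasurable κ →
    (∀ β < κ, ∃ α, β < α ∧ α < κ ∧ IsSupercompact α) →
    ∀ U, IsNormalUltrafilterOn κ U → {α | α < κ ∧ IsMeasurable α} ∈ U →
    ∃ V, IsNormalUltrafilterOn κ V ∧
      {α | α < κ ∧ IsMeasurable α ∧ (∀ β < α, ∃ γ, β < γ ∧ γ < α ∧ IsSupercompact γ) ∧
        ¬ IsSupercompact α} ∈ V := by
  intro κ
  induction κ using Ordinal.induction with
  | h κ IH =>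
  intro hκ hub U hU hmeas
  classical
  set B := {α | α < κ ∧ IsMeasurable α ∧ (∀ β < α, ∃ γ, β < γ ∧ γ < α ∧ IsSupercompact γ) ∧
    ¬ IsSupercompact α} with hBdef
  by_cases hBU : B ∈ U
  · exact ⟨U, hU, hBU⟩
  have hsucc := succ_lt_of_meas hκ
  have hL : {α | α < κ ∧ ∀ β < α, ∃ γ, β < γ ∧ γ < α ∧ IsSupercompact γ} ∈ U :=
    limsc_mem hU hsucc hub
  have hBc : Set.Iio κ \ B ∈ U := hU.1.compl_mem (fun α hα => hα.1) hBU
  have hS : {α | α < κ ∧ IsMeasurable α} ∩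
      {α | α < κ ∧ ∀ β < α, ∃ γ, β < γ ∧ γ < α ∧ IsSupercompact γ} ∩ (Set.Iio κ \ B) ∈ U :=
    hU.1.inter_mem _ (hU.1.inter_mem _ hmeas _ hL) _ hBc
  set S := {α | α < κ ∧ IsMeasurable α} ∩
      {α | α < κ ∧ ∀ β < α, ∃ γ, β < γ ∧ γ < α ∧ IsSupercompact γ} ∩ (Set.Iio κ \ B)
    with hSdef
  have hSsc : ∀ α ∈ S, α < κ ∧ IsMeasurable α ∧
      (∀ β < α, ∃ γ, β < γ ∧ γ < α ∧ IsSupercompact γ) ∧ IsSupercompact α := by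
    rintro α ⟨⟨⟨hα1, hα2⟩, hα3⟩, hα4⟩
    refine ⟨hα1, hα2, hα3.2, ?_⟩
    by_contra hsc
    exact hα4.2 ⟨hα1, hα2, hα3.2, hsc⟩
  -- for every α ∈ S, apply the induction hypothesis at α
  have hch : ∀ α, ∃ V, α ∈ S → (IsNormalUltrafilterOn α V ∧
      {β | β < α ∧ IsMeasurable β ∧ (∀ β' < β, ∃ γ, β' < γ ∧ γ < β ∧ IsSupercompact γ) ∧
        ¬ IsSupercompact β} ∈ V) := by
    intro α
    by_cases hαS : α ∈ S
    · obtain ⟨hα1, hα2, hα3, hα4⟩ := hSsc α hαS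
      obtain ⟨w, hwnorm, hwcomp, hwnp, hwmeas⟩ := crux_of_sc hα4
      obtain ⟨V, hV1, hV2⟩ := IH α hα1 hα2 hα3 w hwnorm hwmeas
      exact ⟨V, fun _ => ⟨hV1, hV2⟩⟩
    · exact ⟨∅, fun hc => absurd hc hαS⟩
  choose Vf hVf using hch
  set V : Set (Set Ordinal) :=
    {Y | Y ⊆ Set.Iio κ ∧ {α | α ∈ S ∧ Y ∩ Set.Iio α ∈ Vf α} ∈ U} with hVdef
  have hinnersub : ∀ Y : Set Ordinal, {α | α ∈ S ∧ Y ∩ Set.Iio α ∈ Vf α} ⊆ Set.Iio κ :=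
    fun Y α hα => (hSsc α hα.1).1
  have hVuniv : Set.Iio κ ∈ V := by
    refine ⟨Set.Subset.rfl, ?_⟩
    refine hU.1.mem_of_superset hS ?_ (hinnersub _)
    intro α hα
    refine ⟨hα, ?_⟩
    rw [Set.inter_eq_self_of_subset_right (Set.Iio_subset_Iio (hSsc α hα).1.le)]
    exact (hVf α hα).1.1.univ_mem
  have hVinter : ∀ X ∈ V, ∀ Y ∈ V, X ∩ Y ∈ V := by
    rintro X ⟨hXsub, hXin⟩ Y ⟨hYsub, hYin⟩
    refine ⟨fun β hβ => hXsub hβ.1, ?_⟩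
    refine hU.1.mem_of_superset (hU.1.inter_mem _ hXin _ hYin) ?_ (hinnersub _)
    rintro α ⟨⟨hαS, hX⟩, -, hY⟩
    refine ⟨hαS, ?_⟩
    have := (hVf α hαS).1.1.inter_mem _ hX _ hY
    have heq : X ∩ Set.Iio α ∩ (Y ∩ Set.Iio α) = X ∩ Y ∩ Set.Iio α := by
      ext z; simp only [Set.mem_inter_iff]; tauto
    rwa [heq] at this
  have hVmoc : ∀ X, X ⊆ Set.Iio κ → (X ∈ V ∨ (Set.Iio κ \ X) ∈ V) := by
    intro X hXsub
    by_cases h : {α | α ∈ S ∧ X ∩ Set.Iio α ∈ Vf α} ∈ U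
    · exact Or.inl ⟨hXsub, h⟩
    · right
      refine ⟨Set.diff_subset, ?_⟩
      have hc : Set.Iio κ \ {α | α ∈ S ∧ X ∩ Set.Iio α ∈ Vf α} ∈ U :=
        hU.1.compl_mem (hinnersub _) h
      refine hU.1.mem_of_superset (hU.1.inter_mem _ hS _ hc) ?_ (hinnersub _)
      rintro α ⟨hαS, -, hαn⟩
      refine ⟨hαS, ?_⟩
      have hnot : X ∩ Set.Iio α ∉ Vf α := fun hc' => hαn ⟨hαS, hc'⟩
      have := (hVf α hαS).1.1.compl_mem Set.inter_subset_right hnot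
      have heq : Set.Iio α \ (X ∩ Set.Iio α) = (Set.Iio κ \ X) ∩ Set.Iio α := by
        ext β
        simp only [Set.mem_diff, Set.mem_inter_iff, Set.mem_Iio]
        constructor
        · rintro ⟨hβ, hβn⟩
          exact ⟨⟨lt_trans hβ (hSsc α hαS).1, fun hX => hβn ⟨hX, hβ⟩⟩, hβ⟩
        · rintro ⟨⟨-, hβn⟩, hβ⟩
          exact ⟨hβ, fun hc'' => hβn hc''.1⟩
      rwa [heq] at this
  have hVempty : (∅ : Set Ordinal) ∉ V := by
    rintro ⟨-, hin⟩
    have : {α | α ∈ S ∧ (∅ : Set Ordinal) ∩ Set.Iio α ∈ Vf α} = ∅ := by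
      ext α
      simp only [Set.mem_setOf_eq, Set.mem_empty_iff_false, iff_false, not_and]
      intro hαS hmem
      rw [Set.empty_inter] at hmem
      exact (hVf α hαS).1.1.empty_not_mem hmem
    rw [this] at hin
    exact hU.1.empty_not_mem hin
  have hVsuper : ∀ X ∈ V, ∀ Y, Y ⊆ Set.Iio κ → X ⊆ Y → Y ∈ V := by
    rintro X ⟨hXsub, hXin⟩ Y hYsub hXY
    refine ⟨hYsub, ?_⟩
    refine hU.1.mem_of_superset hXin ?_ (hinnersub _)
    rintro α ⟨hαS, hX⟩
    refine ⟨hαS, ?_⟩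
    exact (hVf α hαS).1.1.mem_of_superset hX (fun β hβ => ⟨hXY hβ.1, hβ.2⟩)
      (fun β hβ => hβ.2)
  have hVcob : ∀ γ < κ, {β | γ ≤ β ∧ β < κ} ∈ V := by
    intro γ hγ
    refine ⟨fun β hβ => hβ.2, ?_⟩
    have hγ1 : γ + 1 < κ := hsucc γ hγ
    refine hU.1.mem_of_superset (hU.1.inter_mem _ hS _ (hU.2.1 _ hγ1)) ?_ (hinnersub _)
    rintro α ⟨hαS, hγα, hακ⟩
    refine ⟨hαS, ?_⟩
    have hγα' : γ < α := by
      calc γ < γ + 1 := by rw [Ordinal.add_one_eq_succ]; exact Order.lt_succ γ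
      _ ≤ α := hγα
    have heq : {β | γ ≤ β ∧ β < κ} ∩ Set.Iio α = {β | γ ≤ β ∧ β < α} := by
      ext β
      simp only [Set.mem_inter_iff, Set.mem_setOf_eq, Set.mem_Iio]
      constructor
      · rintro ⟨⟨h1, -⟩, h2⟩
        exact ⟨h1, h2⟩
      · rintro ⟨h1, h2⟩
        exact ⟨⟨h1, lt_trans h2 (hSsc α hαS).1⟩, h2⟩
    rw [heq]
    exact (hVf α hαS).1.2.1 γ hγα'
  have hVnorm : ∀ f : Ordinal → Ordinal, ∀ Y ∈ V, (∀ β ∈ Y, 0 < β → f β < β) →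
      ∃ T ∈ V, ∃ γ, ∀ β ∈ T, f β = γ := by
    rintro f Y ⟨hYsub, hYin⟩ hreg
    -- for each α in the inner set, press down inside Vf α
    have hch2 : ∀ α, ∃ γα, (α ∈ S ∧ Y ∩ Set.Iio α ∈ Vf α) →
        (γα < α ∧ {β | β ∈ Y ∧ 1 ≤ β ∧ β < α ∧ f β = γα} ∈ Vf α) := by
      intro α
      by_cases hα : α ∈ S ∧ Y ∩ Set.Iio α ∈ Vf α
      · obtain ⟨hαS, hαY⟩ := hα
        have h1α : (1 : Ordinal) < α :=
          lt_trans Ordinal.one_lt_omega0 (hSsc α hαS).2.1.2.1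
        have hY' : Y ∩ Set.Iio α ∩ {β | 1 ≤ β ∧ β < α} ∈ Vf α :=
          (hVf α hαS).1.1.inter_mem _ hαY _ ((hVf α hαS).1.2.1 1 h1α)
        have hreg' : ∀ β ∈ Y ∩ Set.Iio α ∩ {β | 1 ≤ β ∧ β < α}, 0 < β → f β < β :=
          fun β hβ h0 => hreg β hβ.1.1 h0
        obtain ⟨Tα, hTα, γα, hγα⟩ := (hVf α hαS).1.2.2 f _ hY' hreg'
        have hTY : Tα ∩ (Y ∩ Set.Iio α ∩ {β | 1 ≤ β ∧ β < α}) ∈ Vf α :=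
          (hVf α hαS).1.1.inter_mem _ hTα _ hY'
        obtain ⟨βw, hβw⟩ := (hVf α hαS).1.1.nonempty_of_mem hTY
        have hγαval : γα = f βw := (hγα βw hβw.1).symm
        have h0βw : 0 < βw := lt_of_lt_of_le zero_lt_one hβw.2.2.1
        have hγαlt : γα < α := by
          rw [hγαval]
          exact lt_trans (hreg βw hβw.2.1.1 h0βw) hβw.2.1.2
        refine ⟨γα, fun _ => ⟨hγαlt, ?_⟩⟩
        refine (hVf α hαS).1.1.mem_of_superset hTY ?_ (fun β hβ => hβ.2.2.1)
        rintro β ⟨hβT, hβY, hβα⟩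
        exact ⟨hβY.1, hβα.1, hβα.2, hγα β hβT⟩
      · exact ⟨0, fun hc => absurd hc hα⟩
    choose gf hgf using hch2
    have hSY : {α | α ∈ S ∧ Y ∩ Set.Iio α ∈ Vf α} ∈ U := hYin
    have hgreg : ∀ α ∈ {α | α ∈ S ∧ Y ∩ Set.Iio α ∈ Vf α}, 0 < α → gf α < α :=
      fun α hα _ => (hgf α hα).1
    obtain ⟨T', hT', γ, hγ'⟩ := hU.2.2 gf _ hSY hgreg
    have hT'' : T' ∩ {α | α ∈ S ∧ Y ∩ Set.Iio α ∈ Vf α} ∈ U := hU.1.inter_mem _ hT' _ hSY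
    refine ⟨{β | β ∈ Y ∧ 1 ≤ β ∧ f β = γ}, ⟨fun β hβ => hYsub hβ.1, ?_⟩, γ,
      fun β hβ => hβ.2.2⟩
    refine hU.1.mem_of_superset hT'' ?_ (hinnersub _)
    rintro α ⟨hαT', hαin⟩
    refine ⟨hαin.1, ?_⟩
    have hgfγ : gf α = γ := hγ' α hαT'
    have hmem := (hgf α hαin).2
    rw [hgfγ] at hmem
    refine (hVf α hαin.1).1.1.mem_of_superset hmem ?_ (fun β hβ => hβ.2)
    rintro β ⟨h1, h2, h3, h4⟩
    exact ⟨⟨h1, h2, h4⟩, h3⟩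
  have hBV : B ∈ V := by
    refine ⟨fun β hβ => hβ.1, ?_⟩
    refine hU.1.mem_of_superset hS ?_ (hinnersub _)
    intro α hαS
    refine ⟨hαS, ?_⟩
    have hBα : B ∩ Set.Iio α = {β | β < α ∧ IsMeasurable β ∧
        (∀ β' < β, ∃ γ, β' < γ ∧ γ < β ∧ IsSupercompact γ) ∧ ¬ IsSupercompact β} := by
      ext β
      simp only [hBdef, Set.mem_inter_iff, Set.mem_setOf_eq, Set.mem_Iio]
      constructor
      · rintro ⟨⟨-, h2, h3, h4⟩, h5⟩
        exact ⟨h5, h2, h3, h4⟩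
      · rintro ⟨h1, h2, h3, h4⟩
        exact ⟨⟨lt_trans h1 (hSsc α hαS).1, h2, h3, h4⟩, h1⟩
    rw [hBα]
    exact (hVf α hαS).2
  exact ⟨V, ⟨⟨fun Y hY => hY.1, hVuniv, hVempty, hVsuper, hVinter, hVmoc⟩,
    hVcob, hVnorm⟩, hBV⟩


/-- If `κ` is measurable, a limit of supercompact cardinals, and some normal ultrafilter
on `κ` contains the measurables, then some normal ultrafilter `V` on `κ` contains the set
of measurables which are limits of supercompacts but not supercompact; moreover every
member of that set is compact. -/
theorem nonsupercompact_limits_of_supercompacts (κ : Ordinal) (hκ : IsMeasurable κ)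
    (hub : ∀ β < κ, ∃ α, β < α ∧ α < κ ∧ IsSupercompact α)
    (U : Set (Set Ordinal)) (hU : IsNormalUltrafilterOn κ U)
    (hmeas : {α | α < κ ∧ IsMeasurable α} ∈ U) :
    ∃ V, IsNormalUltrafilterOn κ V ∧
      {α | α < κ ∧ IsMeasurable α ∧ (∀ β < α, ∃ γ, β < γ ∧ γ < α ∧ IsSupercompact γ) ∧
        ¬ IsSupercompact α} ∈ V ∧
      ∀ α ∈ {α | α < κ ∧ IsMeasurable α ∧ (∀ β < α, ∃ γ, β < γ ∧ γ < α ∧ IsSupercompact γ) ∧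
        ¬ IsSupercompact α}, IsCompact α := by
  obtain ⟨V, hV1, hV2⟩ := main_aux κ hκ hub U hU hmeas
  exact ⟨V, hV1, hV2, fun α hα => compact_of_meas_limsc hα.2.1 hα.2.2.1⟩

end Separability
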